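/- Existence of zeros under perturbation: Under the quantitative hypotheses (⋆), for every ε ∈ (0, ε₀] there exists x in the open ball B(p,R) such that y(ε, x) = 0. -/

import Mathlib

open Metric Set

set_option maxHeartbeats 2000000 in
/-- **Existence of zeros under perturbation.**
Under the quantitative hypotheses (⋆), for every `ε ∈ (0, ε₀]` there exists `x`
in the open ball `B(p,R)` such that `y (ε, x) = 0`. -/
theorem existence_of_zeros_under_perturbation
    {X₁ X₂ : Type*}
    [NormedAddCommGroup X₁] [NormedSpace ℝ X₁] [FiniteDimensional ℝ X₁]
    [NormedAddCommGroup X₂] [NormedSpace ℝ X₂] [FiniteDimensional ℝ X₂]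
    (y : ℝ × (X₁ × X₂) → X₁ × X₂)
    (ε₀ R : ℝ) (hε₀ : 0 < ε₀) (hR : 0 < R)
    (p : X₁ × X₂)
    (hy : ContDiff ℝ 2 y)
    (hyp : y (0, p) = 0)
    (hy₂ : ∀ x ∈ closedBall p R, (y (0, x)).2 = 0)
    (A₁₁ : X₁ ≃L[ℝ] X₁) (A₂₂ : X₂ ≃L[ℝ] X₂)
    (hA₁₁ : (A₁₁ : X₁ →L[ℝ] X₁) = fderiv ℝ (fun x₁ => (y (0, (x₁, p.2))).1) p.1)
    (hA₂₂ : (A₂₂ : X₂ →L[ℝ] X₂)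
      = deriv (fun ε => fderiv ℝ (fun x₂ => (y (ε, (p.1, x₂))).2) p.2) 0)
    (δ₁ δ₂ η₁ η₂ : ℝ)
    (hδ₁0 : 0 ≤ δ₁) (hδ₂0 : 0 ≤ δ₂) (hη₁0 : 0 ≤ η₁) (hη₂0 : 0 ≤ η₂)
    (hδ₁ : ∀ ε ∈ Icc (0:ℝ) ε₀, ∀ x ∈ closedBall p R,
      ‖fderiv ℝ (fun x' => (y (ε, x')).1) x
        - (A₁₁ : X₁ →L[ℝ] X₁).comp (ContinuousLinearMap.fst ℝ X₁ X₂)‖ ≤ δ₁)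
    (hδ₂ : ∀ ε ∈ Icc (0:ℝ) ε₀, ∀ x ∈ closedBall p R,
      ‖deriv (fun ε' => fderiv ℝ (fun x' => (y (ε', x')).2) x) ε
        - (A₂₂ : X₂ →L[ℝ] X₂).comp (ContinuousLinearMap.snd ℝ X₁ X₂)‖ ≤ δ₂)
    (hη₁ : ∀ ε ∈ Icc (0:ℝ) ε₀, ‖deriv (fun ε' => (y (ε', p)).1) ε‖ ≤ η₁)
    (hη₂ : ∀ ε ∈ Icc (0:ℝ) ε₀, ‖deriv (fun ε' => (y (ε', p)).2) ε‖ ≤ η₂)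
    (hm₁ : ε₀ * η₁ + δ₁ * R < ‖(A₁₁.symm : X₁ →L[ℝ] X₁)‖⁻¹ * R)
    (hm₂ : η₂ + δ₂ * R < ‖(A₂₂.symm : X₂ →L[ℝ] X₂)‖⁻¹ * R) :
    ∀ ε ∈ Ioc (0:ℝ) ε₀, ∃ x ∈ ball p R, y (ε, x) = 0 := by
  clear hA₁₁ hA₂₂
  set na := ‖(A₁₁.symm : X₁ →L[ℝ] X₁)‖ with hna_def
  set nb := ‖(A₂₂.symm : X₂ →L[ℝ] X₂)‖ with hnb_def
  -- positivity of operator norms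
  have hna : 0 < na := by
    rcases (norm_nonneg (A₁₁.symm : X₁ →L[ℝ] X₁)).lt_or_eq with h | h
    · exact h
    · exfalso
      have hz : na = 0 := hna_def.trans h.symm
      rw [hz, inv_zero, zero_mul] at hm₁
      nlinarith [mul_nonneg hε₀.le hη₁0, mul_nonneg hδ₁0 hR.le]
  have hnb : 0 < nb := by
    rcases (norm_nonneg (A₂₂.symm : X₂ →L[ℝ] X₂)).lt_or_eq with h | h
    · exact h
    · exfalso
      have hz : nb = 0 := hnb_def.trans h.symm
      rw [hz, inv_zero, zero_mul] at hm₂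
      nlinarith [mul_nonneg hδ₂0 hR.le]
  have key1 : na * (ε₀ * η₁ + δ₁ * R) < R := by
    have := (mul_lt_mul_iff_right₀ hna).mpr hm₁
    rwa [← mul_assoc, mul_inv_cancel₀ hna.ne', one_mul] at this
  have key2 : nb * (η₂ + δ₂ * R) < R := by
    have := (mul_lt_mul_iff_right₀ hnb).mpr hm₂
    rwa [← mul_assoc, mul_inv_cancel₀ hnb.ne', one_mul] at this
  have hk1 : na * δ₁ < 1 := by nlinarith [mul_nonneg hε₀.le hη₁0]
  have hk2 : nb * δ₂ < 1 := by nlinarith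
  -- global differentiability facts
  have hyd : Differentiable ℝ y := hy.differentiable (by norm_num)
  have hfd : Differentiable ℝ (fderiv ℝ y) :=
    (hy.fderiv_right (m := 1) (by norm_num)).differentiable (by norm_num)
  have hK : ∀ (e : ℝ) (x : X₁ × X₂), HasFDerivAt (fun x' => (y (e, x')).2)
      ((ContinuousLinearMap.snd ℝ X₁ X₂).comp ((fderiv ℝ y (e, x)).comp
        (ContinuousLinearMap.inr ℝ ℝ (X₁ × X₂)))) x :=
    fun e x => (((hyd (e, x)).hasFDerivAt.comp x (hasFDerivAt_prodMk_right e x)).snd)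
  have hK1 : ∀ (e : ℝ) (x : X₁ × X₂), DifferentiableAt ℝ (fun x' => (y (e, x')).1) x :=
    fun e x => (((hyd (e, x)).hasFDerivAt.comp x (hasFDerivAt_prodMk_right e x)).fst).differentiableAt
  have hKdiff : ∀ x : X₁ × X₂,
      Differentiable ℝ (fun e => fderiv ℝ (fun x' => (y (e, x')).2) x) := by
    intro x
    have heq : (fun e => fderiv ℝ (fun x' => (y (e, x')).2) x)
        = fun e => (ContinuousLinearMap.snd ℝ X₁ X₂).comp ((fderiv ℝ y (e, x)).comp
            (ContinuousLinearMap.inr ℝ ℝ (X₁ × X₂))) :=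
      funext fun e => (hK e x).fderiv
    rw [heq]
    exact (differentiable_const _).clm_comp
      ((hfd.comp (differentiable_id.prodMk (differentiable_const x))).clm_comp
        (differentiable_const _))
  have K0 : ∀ x ∈ closedBall p R, fderiv ℝ (fun x' => (y (0, x')).2) x = 0 := by
    have hball : ∀ x ∈ ball p R, fderiv ℝ (fun x' => (y (0, x')).2) x = 0 := by
      intro x hx
      have hev : (fun x' => (y (0, x')).2) =ᶠ[nhds x] (fun _ => (0 : X₂)) :=
        Filter.eventuallyEq_of_mem (isOpen_ball.mem_nhds hx)
          (fun x' hx' => hy₂ x' (ball_subset_closedBall hx'))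
      rw [hev.fderiv_eq]
      exact fderiv_const_apply 0
    intro x hx
    have hx' : x ∈ closure (ball p R) := by rwa [closure_ball p hR.ne']
    have hcont : Continuous fun z => fderiv ℝ (fun x' => (y (0, x')).2) z := by
      have heq : (fun z => fderiv ℝ (fun x' => (y (0, x')).2) z)
          = fun z => (ContinuousLinearMap.snd ℝ X₁ X₂).comp ((fderiv ℝ y (0, z)).comp
              (ContinuousLinearMap.inr ℝ ℝ (X₁ × X₂))) :=
        funext fun z => (hK 0 z).fderiv
      rw [heq]
      exact continuous_const.clm_comp
        (((hfd.continuous.comp (continuous_const.prodMk continuous_id)).clm_comp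
          continuous_const))
    exact closure_minimal (fun z hz => hball z hz)
      (isClosed_eq hcont continuous_const) hx'
  -- differentiability of the curves ε ↦ y(ε, p)
  have hcurv : ∀ t : ℝ, DifferentiableAt ℝ (fun ε' => y (ε', p)) t :=
    fun t => (hyd (t, p)).comp t (differentiableAt_id.prodMk (differentiableAt_const p))
  -- main argument
  intro ε hε
  have hεpos : (0:ℝ) < ε := hε.1
  have hεle : ε ≤ ε₀ := hε.2
  set φ₁ := (A₁₁ : X₁ →L[ℝ] X₁).comp (ContinuousLinearMap.fst ℝ X₁ X₂) with hφ₁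
  set φ₂ := (A₂₂ : X₂ →L[ℝ] X₂).comp (ContinuousLinearMap.snd ℝ X₁ X₂) with hφ₂
  -- F4 : ‖y₁(ε,p)‖ ≤ η₁ * ε
  have hF4 : ‖(y (ε, p)).1‖ ≤ η₁ * ε := by
    have h := norm_image_sub_le_of_norm_deriv_le_segment'
      (f := fun ε' => (y (ε', p)).1)
      (f' := fun t => deriv (fun ε' => (y (ε', p)).1) t) (a := 0) (b := ε)
      (fun t _ => ((hcurv t).fst.hasDerivAt).hasDerivWithinAt)
      (fun t ht => hη₁ t ⟨ht.1, ht.2.le.trans hεle⟩)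
      ε (right_mem_Icc.2 hεpos.le)
    simpa [hyp] using h
  have hF5 : ‖(y (ε, p)).2‖ ≤ η₂ * ε := by
    have h := norm_image_sub_le_of_norm_deriv_le_segment'
      (f := fun ε' => (y (ε', p)).2)
      (f' := fun t => deriv (fun ε' => (y (ε', p)).2) t) (a := 0) (b := ε)
      (fun t _ => ((hcurv t).snd.hasDerivAt).hasDerivWithinAt)
      (fun t ht => hη₂ t ⟨ht.1, ht.2.le.trans hεle⟩)
      ε (right_mem_Icc.2 hεpos.le)
    simpa [hyp] using h
  -- F2 : fderiv of the second slice is close to ε • φ₂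
  have hF2 : ∀ x ∈ closedBall p R,
      ‖fderiv ℝ (fun x' => (y (ε, x')).2) x - ε • φ₂‖ ≤ δ₂ * ε := by
    intro x hx
    have hsm : ∀ t : ℝ, HasDerivAt (fun s : ℝ => s • φ₂) φ₂ t := by
      intro t
      simpa using (hasDerivAt_id t).smul_const φ₂
    have h := norm_image_sub_le_of_norm_deriv_le_segment'
      (f := fun t => fderiv ℝ (fun x' => (y (t, x')).2) x - t • φ₂)
      (f' := fun t => deriv (fun e => fderiv ℝ (fun x' => (y (e, x')).2) x) t - φ₂)
      (a := 0) (b := ε)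
      (fun t _ => (((hKdiff x t).hasDerivAt.sub (hsm t)).hasDerivWithinAt))
      (fun t ht => hδ₂ t ⟨ht.1, ht.2.le.trans hεle⟩ x hx)
      ε (right_mem_Icc.2 hεpos.le)
    simpa [K0 x hx] using h
  -- mean value estimates in x
  have hF1 : ∀ x ∈ closedBall p R, ∀ x' ∈ closedBall p R,
      ‖(y (ε, x')).1 - (y (ε, x)).1 - φ₁ (x' - x)‖ ≤ δ₁ * ‖x' - x‖ :=
    fun x hx x' hx' => (convex_closedBall p R).norm_image_sub_le_of_norm_fderiv_le'
      (fun z _ => hK1 ε z) (fun z hz => hδ₁ ε ⟨hεpos.le, hεle⟩ z hz) hx hx'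
  have hF3 : ∀ x ∈ closedBall p R, ∀ x' ∈ closedBall p R,
      ‖(y (ε, x')).2 - (y (ε, x)).2 - (ε • φ₂) (x' - x)‖ ≤ (δ₂ * ε) * ‖x' - x‖ :=
    fun x hx x' hx' => (convex_closedBall p R).norm_image_sub_le_of_norm_fderiv_le'
      (fun z _ => (hK ε z).differentiableAt) hF2 hx hx'
  -- the contraction map
  set G : X₁ × X₂ → X₁ × X₂ := fun x =>
    (x.1 - A₁₁.symm ((y (ε, x)).1), x.2 - A₂₂.symm (ε⁻¹ • (y (ε, x)).2)) with hG
  -- componentwise Lipschitz estimates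
  have hL1 : ∀ x ∈ closedBall p R, ∀ x' ∈ closedBall p R,
      ‖(G x').1 - (G x).1‖ ≤ (na * δ₁) * ‖x' - x‖ := by
    intro x hx x' hx'
    have heq : (G x').1 - (G x).1
        = -(A₁₁.symm ((y (ε, x')).1 - (y (ε, x)).1 - A₁₁ (x'.1 - x.1))) := by
      simp only [hG, map_sub, ContinuousLinearEquiv.symm_apply_apply]
      abel
    rw [heq, norm_neg]
    calc ‖A₁₁.symm ((y (ε, x')).1 - (y (ε, x)).1 - A₁₁ (x'.1 - x.1))‖
        ≤ na * ‖(y (ε, x')).1 - (y (ε, x)).1 - A₁₁ (x'.1 - x.1)‖ :=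
          (A₁₁.symm : X₁ →L[ℝ] X₁).le_opNorm _
      _ ≤ na * (δ₁ * ‖x' - x‖) := by
          refine mul_le_mul_of_nonneg_left ?_ hna.le
          have := hF1 x hx x' hx'
          simpa [hφ₁, Prod.fst_sub] using this
      _ = (na * δ₁) * ‖x' - x‖ := by ring
  have hL2 : ∀ x ∈ closedBall p R, ∀ x' ∈ closedBall p R,
      ‖(G x').2 - (G x).2‖ ≤ (nb * δ₂) * ‖x' - x‖ := by
    intro x hx x' hx'
    have heq : (G x').2 - (G x).2
        = -(A₂₂.symm (ε⁻¹ • ((y (ε, x')).2 - (y (ε, x)).2 - ε • A₂₂ (x'.2 - x.2)))) := by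
      simp only [hG, smul_sub, map_sub, map_smul, smul_smul,
        inv_mul_cancel₀ hεpos.ne', one_smul, ContinuousLinearEquiv.symm_apply_apply]
      abel
    rw [heq, norm_neg]
    calc ‖A₂₂.symm (ε⁻¹ • ((y (ε, x')).2 - (y (ε, x)).2 - ε • A₂₂ (x'.2 - x.2)))‖
        ≤ nb * ‖ε⁻¹ • ((y (ε, x')).2 - (y (ε, x)).2 - ε • A₂₂ (x'.2 - x.2))‖ :=
          (A₂₂.symm : X₂ →L[ℝ] X₂).le_opNorm _
      _ = nb * (ε⁻¹ * ‖(y (ε, x')).2 - (y (ε, x)).2 - ε • A₂₂ (x'.2 - x.2)‖) := by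
          rw [norm_smul, Real.norm_eq_abs, abs_of_pos (inv_pos.2 hεpos)]
      _ ≤ nb * (ε⁻¹ * ((δ₂ * ε) * ‖x' - x‖)) := by
          refine mul_le_mul_of_nonneg_left (mul_le_mul_of_nonneg_left ?_
            (inv_pos.2 hεpos).le) hnb.le
          have := hF3 x hx x' hx'
          simpa [hφ₂, Prod.snd_sub] using this
      _ = (nb * δ₂) * ‖x' - x‖ := by field_simp
  -- images of p
  have hGp1 : ‖(G p).1 - p.1‖ ≤ na * (η₁ * ε₀) := by
    have heq : (G p).1 - p.1 = -(A₁₁.symm ((y (ε, p)).1)) := by simp [hG]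
    rw [heq, norm_neg]
    calc ‖A₁₁.symm ((y (ε, p)).1)‖ ≤ na * ‖(y (ε, p)).1‖ :=
          (A₁₁.symm : X₁ →L[ℝ] X₁).le_opNorm _
      _ ≤ na * (η₁ * ε₀) := by
          refine mul_le_mul_of_nonneg_left (hF4.trans ?_) hna.le
          exact mul_le_mul_of_nonneg_left hεle hη₁0
  have hGp2 : ‖(G p).2 - p.2‖ ≤ nb * η₂ := by
    have heq : (G p).2 - p.2 = -(A₂₂.symm (ε⁻¹ • (y (ε, p)).2)) := by simp [hG]
    rw [heq, norm_neg]
    calc ‖A₂₂.symm (ε⁻¹ • (y (ε, p)).2)‖ ≤ nb * ‖ε⁻¹ • (y (ε, p)).2‖ :=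
          (A₂₂.symm : X₂ →L[ℝ] X₂).le_opNorm _
      _ = nb * (ε⁻¹ * ‖(y (ε, p)).2‖) := by
          rw [norm_smul, Real.norm_eq_abs, abs_of_pos (inv_pos.2 hεpos)]
      _ ≤ nb * (ε⁻¹ * (η₂ * ε)) := by
          refine mul_le_mul_of_nonneg_left (mul_le_mul_of_nonneg_left hF5
            (inv_pos.2 hεpos).le) hnb.le
      _ = nb * η₂ := by field_simp
  have hpmem : p ∈ closedBall p R := mem_closedBall_self hR.le
  -- G maps the closed ball into the open ball
  have hmaps : ∀ x ∈ closedBall p R, G x ∈ ball p R := by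
    intro x hx
    have hxp : ‖x - p‖ ≤ R := by rwa [mem_closedBall, dist_eq_norm] at hx
    have h1 : ‖(G x).1 - p.1‖ < R := by
      have e0 : (G x).1 - p.1 = ((G x).1 - (G p).1) + ((G p).1 - p.1) := by abel
      have e1 : ‖(G x).1 - p.1‖ ≤ ‖(G x).1 - (G p).1‖ + ‖(G p).1 - p.1‖ := by
        rw [e0]; exact norm_add_le _ _
      have e2 : ‖(G x).1 - (G p).1‖ ≤ (na * δ₁) * ‖x - p‖ := hL1 p hpmem x hx
      have e3 : (na * δ₁) * ‖x - p‖ ≤ na * δ₁ * R :=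
        mul_le_mul_of_nonneg_left hxp (by positivity)
      calc ‖(G x).1 - p.1‖ ≤ na * δ₁ * R + na * (η₁ * ε₀) := by
            have := e1.trans (add_le_add (e2.trans e3) hGp1); linarith
        _ = na * (ε₀ * η₁ + δ₁ * R) := by ring
        _ < R := key1
    have h2 : ‖(G x).2 - p.2‖ < R := by
      have e0 : (G x).2 - p.2 = ((G x).2 - (G p).2) + ((G p).2 - p.2) := by abel
      have e1 : ‖(G x).2 - p.2‖ ≤ ‖(G x).2 - (G p).2‖ + ‖(G p).2 - p.2‖ := by
        rw [e0]; exact norm_add_le _ _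
      have e2 : ‖(G x).2 - (G p).2‖ ≤ (nb * δ₂) * ‖x - p‖ := hL2 p hpmem x hx
      have e3 : (nb * δ₂) * ‖x - p‖ ≤ nb * δ₂ * R :=
        mul_le_mul_of_nonneg_left hxp (by positivity)
      calc ‖(G x).2 - p.2‖ ≤ nb * δ₂ * R + nb * η₂ := by
            have := e1.trans (add_le_add (e2.trans e3) hGp2); linarith
        _ = nb * (η₂ + δ₂ * R) := by ring
        _ < R := key2
    rw [mem_ball, dist_eq_norm, Prod.norm_def]
    exact max_lt (by simpa [Prod.fst_sub] using h1) (by simpa [Prod.snd_sub] using h2)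
  have hmapsTo : MapsTo G (closedBall p R) (closedBall p R) :=
    fun x hx => ball_subset_closedBall (hmaps x hx)
  -- G is a contraction on the closed ball
  set k : NNReal := Real.toNNReal (max (na * δ₁) (nb * δ₂)) with hk
  have hkmax : (0:ℝ) ≤ max (na * δ₁) (nb * δ₂) :=
    le_max_of_le_left (by positivity)
  have hkcoe : (k : ℝ) = max (na * δ₁) (nb * δ₂) := Real.coe_toNNReal _ hkmax
  have hklt : k < 1 := by
    rw [← NNReal.coe_lt_coe, hkcoe, NNReal.coe_one]
    exact max_lt hk1 hk2
  have hcontr : ContractingWith k (hmapsTo.restrict G _ _) := by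
    refine ⟨hklt, LipschitzWith.of_dist_le_mul ?_⟩
    rintro ⟨x, hx⟩ ⟨x', hx'⟩
    simp only [MapsTo.restrict, Subtype.dist_eq, Subtype.coe_mk]
    rw [Prod.dist_eq, dist_eq_norm, dist_eq_norm, dist_eq_norm]
    have hb1 : ‖(G x).1 - (G x').1‖ ≤ (k : ℝ) * ‖x - x'‖ := by
      refine (hL1 x' hx' x hx).trans ?_
      exact mul_le_mul_of_nonneg_right (hkcoe ▸ le_max_left _ _) (norm_nonneg _)
    have hb2 : ‖(G x).2 - (G x').2‖ ≤ (k : ℝ) * ‖x - x'‖ := by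
      refine (hL2 x' hx' x hx).trans ?_
      exact mul_le_mul_of_nonneg_right (hkcoe ▸ le_max_right _ _) (norm_nonneg _)
    exact max_le hb1 hb2
  have hcomplete : IsComplete (closedBall p R) := isClosed_closedBall.isComplete
  obtain ⟨z, hzmem, hzfix, -, -⟩ := hcontr.exists_fixedPoint' hcomplete hmapsTo hpmem
    (edist_ne_top p (G p))
  refine ⟨z, ?_, ?_⟩
  · have : G z = z := hzfix
    rw [← this]
    exact hmaps z hzmem
  · have hfix : G z = z := hzfix
    have h1 : z.1 - A₁₁.symm ((y (ε, z)).1) = z.1 := congrArg Prod.fst hfix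
    have h2 : z.2 - A₂₂.symm (ε⁻¹ • (y (ε, z)).2) = z.2 := congrArg Prod.snd hfix
    have e1 : A₁₁.symm ((y (ε, z)).1) = 0 := by
      have := sub_eq_self.mp h1
      exact this
    have e2 : A₂₂.symm (ε⁻¹ • (y (ε, z)).2) = 0 := sub_eq_self.mp h2
    have z1 : (y (ε, z)).1 = 0 := by
      have := congrArg A₁₁ e1
      simpa using this
    have z2 : (y (ε, z)).2 = 0 := by
      have := congrArg A₂₂ e2
      simp only [ContinuousLinearEquiv.apply_symm_apply, map_zero] at this
      rcases smul_eq_zero.mp this with h | h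
      · exact absurd h (inv_ne_zero hεpos.ne')
      · exact h
    exact Prod.ext z1 z2
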